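/- There is a monotone submodular function vanishing on the empty set that is not a weighted coverage function: let X be a three-element set and define φ : 2^X → ℝ by φ(S) = |S| if |S| ≤ 2 and φ(X) = 2. Then φ is monotone, submodular, and φ(∅) = 0, but there is NO finite set of features 𝔽, assignment α : X → 2^𝔽, and weight function ν : 𝔽 → ℝ with ν(f) ≥ 0 for all f, such that φ(S) = Σ_{f ∈ ⋃_{s ∈ S} α(s)} ν(f) for all S ⊆ X. -/
import Mathlib

open Finset

/-- The function `φ(S) = min(|S|, 2)` on subsets of a three-element set. -/
noncomputable def phiMin2 (S : Finset (Fin 3)) : ℝ := ((min S.card 2 : ℕ) : ℝ)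

/-- `φ(S) = min(|S|, 2)` on a three-element set is monotone, submodular and vanishes on
`∅`, yet it is NOT a weighted coverage function: there is no finite feature set `𝔽`,
assignment `α` and nonnegative weighting `ν` with `φ(S) = Σ_{f ∈ ⋃_{s ∈ S} α(s)} ν(f)`. -/
theorem monotone_submodular_not_weighted_coverage :
    (∀ A B : Finset (Fin 3), A ⊆ B → phiMin2 A ≤ phiMin2 B) ∧
    (∀ A B : Finset (Fin 3),
      phiMin2 (A ∪ B) + phiMin2 (A ∩ B) ≤ phiMin2 A + phiMin2 B) ∧
    phiMin2 ∅ = 0 ∧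
    ¬ ∃ (𝔽 : Type) (_ : Fintype 𝔽) (_ : DecidableEq 𝔽)
        (α : Fin 3 → Finset 𝔽) (ν : 𝔽 → ℝ),
        (∀ f, 0 ≤ ν f) ∧
        ∀ S : Finset (Fin 3), phiMin2 S = ∑ f ∈ S.biUnion α, ν f := by
  refine ⟨?_, ?_, ?_, ?_⟩
  · intro A B h
    have hc := Finset.card_le_card h
    have : min A.card 2 ≤ min B.card 2 := by omega
    unfold phiMin2
    exact_mod_cast this
  · intro A B
    have h1 := Finset.card_union_add_card_inter A B
    have h2 : (A ∩ B).card ≤ A.card := Finset.card_le_card Finset.inter_subset_left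
    have h3 : (A ∩ B).card ≤ B.card := Finset.card_le_card Finset.inter_subset_right
    have : min (A ∪ B).card 2 + min (A ∩ B).card 2 ≤ min A.card 2 + min B.card 2 := by
      omega
    unfold phiMin2
    exact_mod_cast this
  · simp [phiMin2]
  · rintro ⟨F, _, _, α, ν, hν, hφ⟩
    set w : Finset F → ℝ := fun S => ∑ f ∈ S, ν f with hw
    have wnn : ∀ S, 0 ≤ w S := fun S => Finset.sum_nonneg fun f _ => hν f
    have wui : ∀ A B : Finset F, w (A ∪ B) + w (A ∩ B) = w A + w B := fun A B =>
      Finset.sum_union_inter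
    have c1 : ({0} : Finset (Fin 3)).card = 1 := by decide
    have c2 : ({1} : Finset (Fin 3)).card = 1 := by decide
    have c3 : ({2} : Finset (Fin 3)).card = 1 := by decide
    have c01 : ({0, 1} : Finset (Fin 3)).card = 2 := by decide
    have c02 : ({0, 2} : Finset (Fin 3)).card = 2 := by decide
    have c12 : ({1, 2} : Finset (Fin 3)).card = 2 := by decide
    have c012 : ({0, 1, 2} : Finset (Fin 3)).card = 3 := by decide
    have h0 : w (α 0) = 1 := by
      have := (hφ {0}).symm
      simpa [phiMin2, c1, hw] using this
    have h1 : w (α 1) = 1 := by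
      have := (hφ {1}).symm
      simpa [phiMin2, c2, hw] using this
    have h2 : w (α 2) = 1 := by
      have := (hφ {2}).symm
      simpa [phiMin2, c3, hw] using this
    have h01 : w (α 0 ∪ α 1) = 2 := by
      have := (hφ {0, 1}).symm
      simpa [phiMin2, c01, hw, Finset.biUnion_insert] using this
    have h02 : w (α 0 ∪ α 2) = 2 := by
      have := (hφ {0, 2}).symm
      simpa [phiMin2, c02, hw, Finset.biUnion_insert] using this
    have h12 : w (α 1 ∪ α 2) = 2 := by
      have := (hφ {1, 2}).symm
      simpa [phiMin2, c12, hw, Finset.biUnion_insert] using this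
    have h012 : w (α 0 ∪ (α 1 ∪ α 2)) = 2 := by
      have := (hφ {0, 1, 2}).symm
      simpa [phiMin2, c012, hw, Finset.biUnion_insert] using this
    have i02 : w (α 0 ∩ α 2) = 0 := by
      have := wui (α 0) (α 2); nlinarith [wnn (α 0 ∩ α 2)]
    have i12 : w (α 1 ∩ α 2) = 0 := by
      have := wui (α 1) (α 2); nlinarith [wnn (α 1 ∩ α 2)]
    have key : w ((α 0 ∪ α 1) ∩ α 2) = 1 := by
      have h := wui (α 0 ∪ α 1) (α 2)
      rw [Finset.union_assoc] at h
      linarith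
    have hd : (α 0 ∪ α 1) ∩ α 2 = (α 0 ∩ α 2) ∪ (α 1 ∩ α 2) :=
      Finset.union_inter_distrib_right _ _ _
    have h := wui (α 0 ∩ α 2) (α 1 ∩ α 2)
    rw [← hd] at h
    have := wnn ((α 0 ∩ α 2) ∩ (α 1 ∩ α 2))
    linarith
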